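/- Let p be a prime and let G = C_{p^{n_1}} × ⋯ × C_{p^{n_r}} be a finite abelian p-group, where the i-th factor is cyclic of order p^{n_i} with generator g_i (n_i ≥ 1). Then the module of Kähler differentials Ω_{F_p[G]/F_p} of the group algebra F_p[G] is a free F_p[G]-module of rank r with basis dg_1, …, dg_r. -/

import Mathlib

/-- The finite abelian `p`-group `G = C_{p^{n_1}} × ⋯ × C_{p^{n_r}}`. -/
abbrev PGroup (p r : ℕ) (n : Fin r → ℕ) : Type :=
  (i : Fin r) → Multiplicative (ZMod (p ^ n i))

/-- The generator `g_i` of the `i`-th cyclic factor of `G`. -/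
noncomputable def pGen (p r : ℕ) (n : Fin r → ℕ) (i : Fin r) : PGroup p r n :=
  Pi.mulSingle i (Multiplicative.ofAdd 1)

section Aux

variable (p r : ℕ) [Fact p.Prime] (n : Fin r → ℕ) (hn : ∀ i, 1 ≤ n i)

/-- The 1-cocycle underlying the universal derivation. -/
noncomputable def coc (g : PGroup p r n) :
    Fin r → MonoidAlgebra (ZMod p) (PGroup p r n) := fun i =>
  MonoidAlgebra.single (g * (pGen p r n i)⁻¹)
    (ZMod.castHom (dvd_pow_self p (Nat.one_le_iff_ne_zero.mp (hn i))) (ZMod p)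
      (Multiplicative.toAdd (g i)))

lemma coc_one : coc p r n hn 1 = 0 := by
  funext i
  simp [coc]

lemma coc_mul (g h : PGroup p r n) :
    coc p r n hn (g * h) =
      MonoidAlgebra.of (ZMod p) (PGroup p r n) g • coc p r n hn h +
        MonoidAlgebra.of (ZMod p) (PGroup p r n) h • coc p r n hn g := by
  funext i
  have h1 : g * h * (pGen p r n i)⁻¹ = g * (h * (pGen p r n i)⁻¹) := by
    rw [mul_assoc]
  have h2 : g * h * (pGen p r n i)⁻¹ = h * (g * (pGen p r n i)⁻¹) := by
    rw [mul_comm g h, mul_assoc]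
  simp only [coc, Pi.add_apply, Pi.smul_apply, smul_eq_mul, MonoidAlgebra.of_apply,
    MonoidAlgebra.single_mul_single, one_mul, Pi.mul_apply, toAdd_mul, map_add]
  rw [show (MonoidAlgebra.single (g * h * (pGen p r n i)⁻¹)
      ((ZMod.castHom (dvd_pow_self p (Nat.one_le_iff_ne_zero.mp (hn i))) (ZMod p))
          (Multiplicative.toAdd (g i)) +
        (ZMod.castHom (dvd_pow_self p (Nat.one_le_iff_ne_zero.mp (hn i))) (ZMod p))
          (Multiplicative.toAdd (h i))) :
      MonoidAlgebra (ZMod p) (PGroup p r n)) = _ + _ from MonoidAlgebra.single_add _ _ _]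
  rw [add_comm]
  congr 1
  · rw [h1]
  · rw [h2]

lemma coc_pGen (j : Fin r) :
    coc p r n hn (pGen p r n j) = Pi.single j 1 := by
  funext i
  by_cases hij : i = j
  · subst hij
    simp only [coc, pGen, Pi.mulSingle_eq_same, toAdd_ofAdd, map_one, mul_inv_cancel,
      Pi.single_eq_same]
    rw [MonoidAlgebra.one_def]
  · simp [coc, pGen, Pi.mulSingle_eq_of_ne hij, Pi.single_eq_of_ne hij]

/-- The linear map underlying the derivation. -/
noncomputable def Tmap :
    MonoidAlgebra (ZMod p) (PGroup p r n) →ₗ[ZMod p]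
      (Fin r → MonoidAlgebra (ZMod p) (PGroup p r n)) :=
  Finsupp.linearCombination (ZMod p) (coc p r n hn) ∘ₗ
    (MonoidAlgebra.coeffLinearEquiv (ZMod p)).toLinearMap

lemma Tmap_single (g : PGroup p r n) (x : ZMod p) :
    Tmap p r n hn (MonoidAlgebra.single g x) = x • coc p r n hn g :=
  Finsupp.linearCombination_single _ _ _

lemma Tmap_of (g : PGroup p r n) :
    Tmap p r n hn (MonoidAlgebra.of (ZMod p) (PGroup p r n) g) = coc p r n hn g := by
  rw [MonoidAlgebra.of_apply, Tmap_single, one_smul]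

lemma Tmap_leibniz (a b : MonoidAlgebra (ZMod p) (PGroup p r n)) :
    Tmap p r n hn (a * b) = a • Tmap p r n hn b + b • Tmap p r n hn a := by
  induction a using MonoidAlgebra.induction_on with
  | add f g hf hg =>
    rw [add_mul, map_add, hf, hg, map_add]
    simp only [add_smul, smul_add]
    abel
  | smul x f hf =>
    rw [smul_mul_assoc, map_smul, hf, map_smul, smul_add, smul_assoc, smul_comm b x]
  | of g =>
    induction b using MonoidAlgebra.induction_on with
    | add f g' hf hg =>
      rw [mul_add, map_add, hf, hg, map_add]
      simp only [add_smul, smul_add]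
      abel
    | smul x f hf =>
      rw [mul_smul_comm, map_smul, hf, map_smul, smul_add, smul_assoc,
        smul_comm (MonoidAlgebra.of (ZMod p) (PGroup p r n) g) x]
    | of h =>
      rw [← map_mul, Tmap_of, Tmap_of, Tmap_of, coc_mul]

/-- The derivation `F_p[G] → F_p[G]^r` extending the cocycle `coc`. -/
noncomputable def Dc :
    Derivation (ZMod p) (MonoidAlgebra (ZMod p) (PGroup p r n))
      (Fin r → MonoidAlgebra (ZMod p) (PGroup p r n)) where
  toLinearMap := Tmap p r n hn
  map_one_eq_zero' := by
    show Tmap p r n hn 1 = 0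
    rw [MonoidAlgebra.one_def, Tmap_single, coc_one, smul_zero]
  leibniz' := Tmap_leibniz p r n hn

lemma Dc_apply (a : MonoidAlgebra (ZMod p) (PGroup p r n)) :
    Dc p r n hn a = Tmap p r n hn a := rfl

/-- The map `F_p[G]^r → Ω` sending `e_i` to `d g_i`. -/
noncomputable def psi :
    (Fin r → MonoidAlgebra (ZMod p) (PGroup p r n))
      →ₗ[MonoidAlgebra (ZMod p) (PGroup p r n)]
      Ω[MonoidAlgebra (ZMod p) (PGroup p r n)⁄ZMod p] :=
  (Pi.basisFun (MonoidAlgebra (ZMod p) (PGroup p r n)) (Fin r)).constr (ZMod p)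
    fun i => KaehlerDifferential.D (ZMod p) (MonoidAlgebra (ZMod p) (PGroup p r n))
      (MonoidAlgebra.of (ZMod p) (PGroup p r n) (pGen p r n i))

lemma psi_single (j : Fin r) :
    psi p r n (Pi.single j 1) =
      KaehlerDifferential.D (ZMod p) (MonoidAlgebra (ZMod p) (PGroup p r n))
        (MonoidAlgebra.of (ZMod p) (PGroup p r n) (pGen p r n j)) := by
  have : (Pi.single j 1 : Fin r → MonoidAlgebra (ZMod p) (PGroup p r n)) =
      Pi.basisFun (MonoidAlgebra (ZMod p) (PGroup p r n)) (Fin r) j := by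
    simp [Pi.basisFun_apply]
  rw [this, psi, Module.Basis.constr_basis]

lemma psi_coc (g : PGroup p r n) :
    psi p r n (coc p r n hn g) =
      KaehlerDifferential.D (ZMod p) (MonoidAlgebra (ZMod p) (PGroup p r n))
        (MonoidAlgebra.of (ZMod p) (PGroup p r n) g) := by
  have hone : psi p r n (coc p r n hn 1) =
      KaehlerDifferential.D (ZMod p) (MonoidAlgebra (ZMod p) (PGroup p r n))
        (MonoidAlgebra.of (ZMod p) (PGroup p r n) (1 : PGroup p r n)) := by
    simp only [coc_one, map_zero, map_one, Derivation.map_one_eq_zero]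
  have hmul : ∀ g h : PGroup p r n,
      psi p r n (coc p r n hn g) =
        KaehlerDifferential.D (ZMod p) (MonoidAlgebra (ZMod p) (PGroup p r n))
          (MonoidAlgebra.of (ZMod p) (PGroup p r n) g) →
      psi p r n (coc p r n hn h) =
        KaehlerDifferential.D (ZMod p) (MonoidAlgebra (ZMod p) (PGroup p r n))
          (MonoidAlgebra.of (ZMod p) (PGroup p r n) h) →
      psi p r n (coc p r n hn (g * h)) =
        KaehlerDifferential.D (ZMod p) (MonoidAlgebra (ZMod p) (PGroup p r n))
          (MonoidAlgebra.of (ZMod p) (PGroup p r n) (g * h)) := by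
    intro g h hg hh
    rw [coc_mul, map_add, map_smul, map_smul, hg, hh, map_mul, Derivation.leibniz]
    try abel
  have hgen : ∀ i, psi p r n (coc p r n hn (pGen p r n i)) =
      KaehlerDifferential.D (ZMod p) (MonoidAlgebra (ZMod p) (PGroup p r n))
        (MonoidAlgebra.of (ZMod p) (PGroup p r n) (pGen p r n i)) := by
    intro i
    rw [coc_pGen, psi_single]
  have hpow : ∀ g : PGroup p r n,
      psi p r n (coc p r n hn g) =
        KaehlerDifferential.D (ZMod p) (MonoidAlgebra (ZMod p) (PGroup p r n))
          (MonoidAlgebra.of (ZMod p) (PGroup p r n) g) →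
      ∀ m : ℕ, psi p r n (coc p r n hn (g ^ m)) =
        KaehlerDifferential.D (ZMod p) (MonoidAlgebra (ZMod p) (PGroup p r n))
          (MonoidAlgebra.of (ZMod p) (PGroup p r n) (g ^ m)) := by
    intro g hg m
    induction m with
    | zero => simpa using hone
    | succ m ih => rw [pow_succ]; exact hmul _ _ ih hg
  have hdecomp : g = ∏ i, pGen p r n i ^ (Multiplicative.toAdd (g i)).val := by
    have key : ∀ i : Fin r,
        pGen p r n i ^ (Multiplicative.toAdd (g i)).val = Pi.mulSingle i (g i) := by
      intro i
      haveI : NeZero (p ^ n i) :=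
        ⟨pow_ne_zero _ (Nat.Prime.ne_zero (Fact.out : p.Prime))⟩
      rw [pGen, ← Pi.mulSingle_pow]
      rw [← ofAdd_nsmul, nsmul_eq_mul, mul_one]
      rw [show ((((Multiplicative.toAdd (g i)).val : ℕ) : ZMod (p ^ n i))) =
        Multiplicative.toAdd (g i) from ZMod.natCast_rightInverse _]
      exact ofAdd_toAdd _
    rw [Finset.prod_congr rfl fun i _ => key i, Finset.univ_prod_mulSingle]
  rw [hdecomp]
  exact Finset.prod_induction _
    (fun g => psi p r n (coc p r n hn g) =
      KaehlerDifferential.D (ZMod p) (MonoidAlgebra (ZMod p) (PGroup p r n))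
        (MonoidAlgebra.of (ZMod p) (PGroup p r n) g))
    hmul hone fun i _ => hpow _ (hgen i) _

lemma psi_Dc (a : MonoidAlgebra (ZMod p) (PGroup p r n)) :
    psi p r n (Dc p r n hn a) =
      KaehlerDifferential.D (ZMod p) (MonoidAlgebra (ZMod p) (PGroup p r n)) a := by
  induction a using MonoidAlgebra.induction_on with
  | of g => rw [Dc_apply, Tmap_of, psi_coc]
  | add f g hf hg => rw [map_add, map_add, hf, hg, map_add]
  | smul x f hf =>
    rw [Derivation.map_smul, LinearMap.map_smul_of_tower, hf, Derivation.map_smul]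

end Aux

/-- The module of Kähler differentials `Ω_{F_p[G]/F_p}` of the group algebra `F_p[G]`
is a free `F_p[G]`-module of rank `r` with basis `dg_1, …, dg_r`. -/
theorem kaehler_free_basis (p : ℕ) [Fact p.Prime] (r : ℕ) (n : Fin r → ℕ)
    (hn : ∀ i, 1 ≤ n i) :
    ∃ b : Module.Basis (Fin r) (MonoidAlgebra (ZMod p) (PGroup p r n))
        (Ω[MonoidAlgebra (ZMod p) (PGroup p r n)⁄ZMod p]),
      ∀ i : Fin r,
        b i = KaehlerDifferential.D (ZMod p) (MonoidAlgebra (ZMod p) (PGroup p r n))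
          (MonoidAlgebra.of (ZMod p) (PGroup p r n) (pGen p r n i)) := by
  classical
  have h₂ : ((Dc p r n hn).liftKaehlerDifferential).comp (psi p r n) = LinearMap.id := by
    apply (Pi.basisFun (MonoidAlgebra (ZMod p) (PGroup p r n)) (Fin r)).ext
    intro j
    rw [LinearMap.comp_apply, psi, Module.Basis.constr_basis, LinearMap.id_apply,
      Derivation.liftKaehlerDifferential_comp_D, Dc_apply, Tmap_of, coc_pGen]
    simp [Pi.basisFun_apply]
  have h₁ : (psi p r n).comp ((Dc p r n hn).liftKaehlerDifferential) = LinearMap.id := by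
    apply LinearMap.ext
    intro ω
    have hω : ω ∈ Submodule.span (MonoidAlgebra (ZMod p) (PGroup p r n))
        (Set.range (KaehlerDifferential.D (ZMod p) (MonoidAlgebra (ZMod p) (PGroup p r n)))) := by
      rw [KaehlerDifferential.span_range_derivation]; trivial
    induction hω using Submodule.span_induction with
    | mem x hx =>
      obtain ⟨a, rfl⟩ := hx
      rw [LinearMap.comp_apply, Derivation.liftKaehlerDifferential_comp_D,
        LinearMap.id_apply]
      exact psi_Dc p r n hn a
    | zero => simp
    | add x y _ _ hx hy => rw [map_add, hx, hy, map_add]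
    | smul c x _ hx => rw [map_smul, hx, map_smul]
  let e : (Fin r → MonoidAlgebra (ZMod p) (PGroup p r n)) ≃ₗ[MonoidAlgebra (ZMod p) (PGroup p r n)]
      Ω[MonoidAlgebra (ZMod p) (PGroup p r n)⁄ZMod p] :=
    LinearEquiv.ofLinear (psi p r n) ((Dc p r n hn).liftKaehlerDifferential) h₁ h₂
  refine ⟨(Pi.basisFun (MonoidAlgebra (ZMod p) (PGroup p r n)) (Fin r)).map e, ?_⟩
  intro i
  rw [Module.Basis.map_apply]
  show psi p r n (Pi.basisFun (MonoidAlgebra (ZMod p) (PGroup p r n)) (Fin r) i) = _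
  rw [psi, Module.Basis.constr_basis]
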